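/- Let k₁, k₂ ∈ ℝ be nonzero and u(x, y) = Real.cos (k₁·x) · Real.cos (k₂·y). Then for all (x, y) and all Δx, Δy with Real.sin (k₁·Δx/2) ≠ 0 and Real.sin (k₂·Δy/2) ≠ 0, the two-dimensional five-point ESDD scheme is exact for the Laplacian: (u(x+Δx, y) − 2·u(x, y) + u(x−Δx, y)) / ((2/k₁)·Real.sin (k₁·Δx/2))² + (u(x, y+Δy) − 2·u(x, y) + u(x, y−Δy)) / ((2/k₂)·Real.sin (k₂·Δy/2))² = −(k₁² + k₂²) · u(x, y). -/

import Mathlib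

lemma central_diff (k x Δ : ℝ) :
    Real.cos (k * (x + Δ)) - 2 * Real.cos (k * x) + Real.cos (k * (x - Δ)) =
    -4 * Real.sin (k * Δ / 2) ^ 2 * Real.cos (k * x) := by
  have h : Real.cos (k * Δ) = 1 - 2 * Real.sin (k * Δ / 2) ^ 2 := by
    have := Real.cos_two_mul (k * Δ / 2)
    have hs := Real.sin_sq_add_cos_sq (k * Δ / 2)
    have : Real.cos (2 * (k * Δ / 2)) = 2 * Real.cos (k * Δ / 2) ^ 2 - 1 := this
    rw [show 2 * (k * Δ / 2) = k * Δ by ring] at this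
    nlinarith
  have h1 : Real.cos (k * (x + Δ)) = Real.cos (k * x) * Real.cos (k * Δ) - Real.sin (k * x) * Real.sin (k * Δ) := by
    rw [mul_add, Real.cos_add]
  have h2 : Real.cos (k * (x - Δ)) = Real.cos (k * x) * Real.cos (k * Δ) + Real.sin (k * x) * Real.sin (k * Δ) := by
    rw [mul_sub, Real.cos_sub]
  rw [h1, h2, h]; ring

theorem esdd_2d_five_point_exact (k₁ k₂ : ℝ) (hk₁ : k₁ ≠ 0) (hk₂ : k₂ ≠ 0)
    (u : ℝ → ℝ → ℝ) (hu : ∀ x y, u x y = Real.cos (k₁ * x) * Real.cos (k₂ * y)) :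
    ∀ x y Δx Δy : ℝ, Real.sin (k₁ * Δx / 2) ≠ 0 → Real.sin (k₂ * Δy / 2) ≠ 0 →
      (u (x + Δx) y - 2 * u x y + u (x - Δx) y) / ((2 / k₁) * Real.sin (k₁ * Δx / 2)) ^ 2
        + (u x (y + Δy) - 2 * u x y + u x (y - Δy)) / ((2 / k₂) * Real.sin (k₂ * Δy / 2)) ^ 2
        = -(k₁ ^ 2 + k₂ ^ 2) * u x y := by
  intro x y Δx Δy hs₁ hs₂
  simp only [hu]
  have e1 : Real.cos (k₁ * (x + Δx)) - 2 * Real.cos (k₁ * x) + Real.cos (k₁ * (x - Δx)) =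
      -4 * Real.sin (k₁ * Δx / 2) ^ 2 * Real.cos (k₁ * x) := central_diff ..
  have e2 : Real.cos (k₂ * (y + Δy)) - 2 * Real.cos (k₂ * y) + Real.cos (k₂ * (y - Δy)) =
      -4 * Real.sin (k₂ * Δy / 2) ^ 2 * Real.cos (k₂ * y) := central_diff ..
  field_simp
  linear_combination (Real.cos (k₂ * y) * k₁ ^ 2 * (Real.sin (k₂ * Δy / 2)) ^ 2) * e1
    + (Real.cos (k₁ * x) * k₂ ^ 2 * (Real.sin (k₁ * Δx / 2)) ^ 2) * e2
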